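/- With 𝐀_F as above, the Frobenius norm satisfies ‖𝐀_F‖_F² ≤ (n²m/N²)·((1/C(N,n)) ∑_{I⊆[N],|I|=n} σ_min^{-2}(X_{I,F}))². -/

import Mathlib

open Finset Matrix

/-- Row/coordinate selection matrix R_I ∈ ℝ^{k×N} for a size-k subset I of Fin N. -/
noncomputable def selMat {N k : ℕ} (I : Finset (Fin N)) (h : I.card = k) :
    Matrix (Fin k) (Fin N) ℝ :=
  Matrix.of fun a j => if (↑(I.orderIsoOfFin h a) : Fin N) = j then (1 : ℝ) else 0

/-- Minipatch submatrix X_{I,F} = R_I X R_Fᵀ. -/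
noncomputable def mpMat (N M n m : ℕ) (X : Matrix (Fin N) (Fin M) ℝ)
    (F : Finset (Fin M)) (hF : F.card = m) (I : Finset (Fin N)) (hI : I.card = n) :
    Matrix (Fin n) (Fin m) ℝ :=
  selMat I hI * X * (selMat F hF)ᵀ

/-- Smallest squared singular value σ_min(A)², via the Rayleigh quotient. -/
noncomputable def sminSq {n m : ℕ} (A : Matrix (Fin n) (Fin m) ℝ) : ℝ :=
  ⨅ v : {v : Fin m → ℝ // ∑ j, (v j) ^ 2 = 1}, ∑ i, (A.mulVec v.1 i) ^ 2

/-- The matrix 𝐀_F = (1/C(N,n)²) ∑_{I,I'} R_Iᵀ X_{I,F}(X_{I,F}ᵀX_{I,F})⁻¹(X_{I',F}ᵀX_{I',F})⁻¹X_{I',F}ᵀ R_{I'}. -/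
noncomputable def AF (N M n m : ℕ) (X : Matrix (Fin N) (Fin M) ℝ)
    (F : Finset (Fin M)) (hF : F.card = m) : Matrix (Fin N) (Fin N) ℝ :=
  ((N.choose n : ℝ) ^ 2)⁻¹ •
    ∑ I ∈ (Finset.powersetCard n (Finset.univ : Finset (Fin N))).attach,
      ∑ J ∈ (Finset.powersetCard n (Finset.univ : Finset (Fin N))).attach,
        (selMat I.1 (Finset.mem_powersetCard.mp I.2).2)ᵀ *
          mpMat N M n m X F hF I.1 (Finset.mem_powersetCard.mp I.2).2 *
          ((mpMat N M n m X F hF I.1 (Finset.mem_powersetCard.mp I.2).2)ᵀ *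
            mpMat N M n m X F hF I.1 (Finset.mem_powersetCard.mp I.2).2)⁻¹ *
          ((mpMat N M n m X F hF J.1 (Finset.mem_powersetCard.mp J.2).2)ᵀ *
            mpMat N M n m X F hF J.1 (Finset.mem_powersetCard.mp J.2).2)⁻¹ *
          (mpMat N M n m X F hF J.1 (Finset.mem_powersetCard.mp J.2).2)ᵀ *
          selMat J.1 (Finset.mem_powersetCard.mp J.2).2

/-! ### Auxiliary lemmas -/

lemma selMat_apply_not_mem {N k : ℕ} {I : Finset (Fin N)} {h : I.card = k} {a : Fin k} {j : Fin N}
    (hj : j ∉ I) : selMat I h a j = 0 := by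
  simp only [selMat, Matrix.of_apply, ite_eq_right_iff]
  intro he; exact absurd (he ▸ (I.orderIsoOfFin h a).2) hj

lemma selMat_mul_transpose {N k : ℕ} (I : Finset (Fin N)) (h : I.card = k) :
    selMat I h * (selMat I h)ᵀ = 1 := by
  ext a b
  simp only [selMat, Matrix.mul_apply, Matrix.transpose_apply, Matrix.of_apply, Matrix.one_apply,
    ite_mul, one_mul, zero_mul]
  rw [Finset.sum_ite_eq (Finset.univ) ((I.orderIsoOfFin h a : Fin N))]
  simp only [Finset.mem_univ, if_true]
  by_cases hab : a = b
  · simp [hab]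
  · rw [if_neg, if_neg hab]
    intro hc
    exact hab (((I.orderIsoOfFin h).injective (Subtype.coe_injective hc.symm)))

lemma sum_sq_eq_trace {p q : ℕ} (A : Matrix (Fin p) (Fin q) ℝ) :
    ∑ i, ∑ j, A i j ^ 2 = Matrix.trace (Aᵀ * A) := by
  simp only [Matrix.trace, Matrix.mul_apply, Matrix.diag_apply, Matrix.transpose_apply, sq]
  exact Finset.sum_comm

lemma transpose_selMat_mul_apply {N k l : ℕ} (I : Finset (Fin N)) (h : I.card = k)
    (Q : Matrix (Fin k) (Fin l) ℝ) {i : Fin N} (hi : i ∉ I) (j : Fin l) :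
    ((selMat I h)ᵀ * Q) i j = 0 := by
  simp only [Matrix.mul_apply, Matrix.transpose_apply]
  exact Finset.sum_eq_zero fun a _ => by rw [selMat_apply_not_mem hi, zero_mul]

lemma mul_selMat_apply {N k l : ℕ} (J : Finset (Fin N)) (h : J.card = k)
    (Q : Matrix (Fin l) (Fin k) ℝ) (i : Fin l) {j : Fin N} (hj : j ∉ J) :
    (Q * selMat J h) i j = 0 := by
  simp only [Matrix.mul_apply]
  exact Finset.sum_eq_zero fun a _ => by rw [selMat_apply_not_mem hj, mul_zero]

lemma card_filter_attach_le (N n : ℕ) (i : Fin N) :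
    ((Finset.powersetCard n (Finset.univ : Finset (Fin N))).attach.filter
      (fun A => i ∈ A.1)).card ≤ (N - 1).choose (n - 1) := by
  have h := Finset.card_le_card_of_injOn (f := fun A => A.1.erase i)
    (s := (Finset.powersetCard n (Finset.univ : Finset (Fin N))).attach.filter (fun A => i ∈ A.1))
    (t := Finset.powersetCard (n - 1) ((Finset.univ : Finset (Fin N)).erase i))
    (fun A hA => by
      have hiA := (Finset.mem_filter.mp hA).2
      have hcard := (Finset.mem_powersetCard.mp A.2).2
      exact Finset.mem_powersetCard.mpr
        ⟨Finset.erase_subset_erase i (Finset.subset_univ _),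
         by rw [Finset.card_erase_of_mem hiA, hcard]⟩)
    (fun A hA B hB hAB => by
      have hiA := (Finset.mem_filter.mp hA).2
      have hiB := (Finset.mem_filter.mp hB).2
      apply Subtype.ext
      rw [← Finset.insert_erase hiA, ← Finset.insert_erase hiB]
      exact congrArg (insert i) hAB)
  rwa [Finset.card_powersetCard, Finset.card_erase_of_mem (Finset.mem_univ i),
    Finset.card_univ, Fintype.card_fin] at h

lemma sminSq_bdd {n m : ℕ} (A : Matrix (Fin n) (Fin m) ℝ) :
    BddBelow (Set.range fun v : {v : Fin m → ℝ // ∑ j, (v j) ^ 2 = 1} =>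
      ∑ i, (A.mulVec v.1 i) ^ 2) := by
  refine ⟨0, ?_⟩
  rintro x ⟨v, rfl⟩
  positivity

lemma sminSq_le {n m : ℕ} (A : Matrix (Fin n) (Fin m) ℝ) (v : Fin m → ℝ) :
    sminSq A * ∑ j, v j ^ 2 ≤ ∑ i, (A.mulVec v i) ^ 2 := by
  by_cases hv : ∑ j, v j ^ 2 = 0
  · rw [hv, mul_zero]; positivity
  · have hc : 0 < ∑ j, v j ^ 2 :=
      lt_of_le_of_ne (Finset.sum_nonneg fun j _ => sq_nonneg _) (Ne.symm hv)
    set c := ∑ j, v j ^ 2 with hcdef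
    have hsc : Real.sqrt c > 0 := Real.sqrt_pos.mpr hc
    have hu : ∑ j, ((Real.sqrt c)⁻¹ • v) j ^ 2 = 1 := by
      simp only [Pi.smul_apply, smul_eq_mul, mul_pow, ← Finset.mul_sum]
      rw [← hcdef, inv_pow, Real.sq_sqrt hc.le, inv_mul_cancel₀ hv]
    have h1 : sminSq A ≤ ∑ i, (A.mulVec ((Real.sqrt c)⁻¹ • v) i) ^ 2 :=
      ciInf_le (sminSq_bdd A) ⟨(Real.sqrt c)⁻¹ • v, hu⟩
    have h2 : ∑ i, (A.mulVec ((Real.sqrt c)⁻¹ • v) i) ^ 2 = c⁻¹ * ∑ i, (A.mulVec v i) ^ 2 := by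
      rw [A.mulVec_smul]
      simp only [Pi.smul_apply, smul_eq_mul, mul_pow, ← Finset.mul_sum]
      rw [inv_pow, Real.sq_sqrt hc.le]
    rw [h2] at h1
    calc sminSq A * c ≤ (c⁻¹ * ∑ i, (A.mulVec v i) ^ 2) * c := by
          apply mul_le_mul_of_nonneg_right h1 hc.le
      _ = ∑ i, (A.mulVec v i) ^ 2 := by field_simp

lemma sminSq_pos {n m : ℕ} (hm : 0 < m) (A : Matrix (Fin n) (Fin m) ℝ)
    (h : IsUnit (Aᵀ * A).det) : 0 < sminSq A := by
  have hf : Continuous fun v : Fin m → ℝ => ∑ j, v j ^ 2 := by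
    exact continuous_finset_sum _ fun j _ => (continuous_apply j).pow 2
  set S : Set (Fin m → ℝ) := {v | ∑ j, v j ^ 2 = 1} with hS
  have hclosed : IsClosed S := isClosed_eq hf continuous_const
  have hbdd : Bornology.IsBounded S := by
    apply (Metric.isBounded_iff_subset_closedBall 0).mpr
    refine ⟨1, fun v hv => ?_⟩
    rw [Metric.mem_closedBall, dist_zero_right]
    refine (pi_norm_le_iff_of_nonneg zero_le_one).mpr fun j => ?_
    rw [Real.norm_eq_abs, ← Real.sqrt_one, ← Real.sqrt_sq_eq_abs]
    apply Real.sqrt_le_sqrt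
    rw [← hv]
    exact Finset.single_le_sum (f := fun j => v j ^ 2) (fun j _ => sq_nonneg _) (Finset.mem_univ j)
  have hcomp : IsCompact S := Metric.isCompact_of_isClosed_isBounded hclosed hbdd
  have hne : S.Nonempty := by
    refine ⟨Pi.single ⟨0, hm⟩ 1, ?_⟩
    simp only [hS, Set.mem_setOf_eq, Pi.single_apply]
    rw [Finset.sum_eq_single ⟨0, hm⟩]
    · simp
    · intro b _ hb; rw [if_neg hb]; ring
    · intro hb; exact absurd (Finset.mem_univ _) hb
  have hg : Continuous fun v : Fin m → ℝ => ∑ i, (A.mulVec v i) ^ 2 := by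
    apply continuous_finset_sum
    intro i _
    have : Continuous fun v : Fin m → ℝ => A.mulVec v i := by
      simp only [Matrix.mulVec, dotProduct]
      exact continuous_finset_sum _ fun j _ => continuous_const.mul (continuous_apply j)
    exact this.pow 2
  obtain ⟨v₀, hv₀S, hmin'⟩ := hcomp.exists_isMinOn hne hg.continuousOn
  have hmin : ∀ v ∈ S, ∑ i, (A.mulVec v₀ i) ^ 2 ≤ ∑ i, (A.mulVec v i) ^ 2 := fun v hv => hmin' hv
  haveI : Nonempty {v : Fin m → ℝ // ∑ j, (v j) ^ 2 = 1} := ⟨⟨hne.choose, hne.choose_spec⟩⟩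
  have hle : ∑ i, (A.mulVec v₀ i) ^ 2 ≤ sminSq A :=
    le_ciInf fun v => hmin v.1 v.2
  refine lt_of_lt_of_le ?_ hle
  rcases lt_or_eq_of_le (Finset.sum_nonneg fun i _ => sq_nonneg (A.mulVec v₀ i)) with hlt | heq
  · exact hlt
  · exfalso
    have hz : A.mulVec v₀ = 0 := by
      funext i
      have := (Finset.sum_eq_zero_iff_of_nonneg fun i _ => sq_nonneg (A.mulVec v₀ i)).mp
        heq.symm i (Finset.mem_univ i)
      exact pow_eq_zero_iff (two_ne_zero) |>.mp this
    have hv0 : v₀ = 0 := by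
      have h1 : (Aᵀ * A).mulVec v₀ = 0 := by
        rw [← Matrix.mulVec_mulVec, hz, Matrix.mulVec_zero]
      have h2 : (Aᵀ * A)⁻¹.mulVec ((Aᵀ * A).mulVec v₀) = v₀ := by
        rw [Matrix.mulVec_mulVec, Matrix.nonsing_inv_mul _ h, Matrix.one_mulVec]
      rw [h1, Matrix.mulVec_zero] at h2
      exact h2.symm
    rw [hS] at hv₀S
    simp only [Set.mem_setOf_eq, hv0, Pi.zero_apply] at hv₀S
    norm_num at hv₀S

lemma dot_transpose_mulVec {n m : ℕ} (A : Matrix (Fin n) (Fin m) ℝ) (w : Fin m → ℝ) :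
    w ⬝ᵥ ((Aᵀ * A).mulVec w) = ∑ i, (A.mulVec w i) ^ 2 := by
  rw [← Matrix.mulVec_mulVec]
  rw [Matrix.dotProduct_mulVec, Matrix.vecMul_transpose]
  simp only [dotProduct, sq]

lemma inv_quadform_le {n m : ℕ} (hm : 0 < m) (A : Matrix (Fin n) (Fin m) ℝ)
    (h : IsUnit (Aᵀ * A).det) (v : Fin m → ℝ) :
    v ⬝ᵥ ((Aᵀ * A)⁻¹.mulVec v) ≤ (sminSq A)⁻¹ * ∑ j, v j ^ 2 := by
  set G := Aᵀ * A with hG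
  set w := G⁻¹.mulVec v with hw
  have hs : 0 < sminSq A := sminSq_pos hm A h
  have hGw : G.mulVec w = v := by
    rw [hw, Matrix.mulVec_mulVec, Matrix.mul_nonsing_inv _ h, Matrix.one_mulVec]
  have ha : v ⬝ᵥ w = ∑ i, (A.mulVec w i) ^ 2 := by
    rw [← dot_transpose_mulVec, ← hG, hGw, dotProduct_comm]
  set a := v ⬝ᵥ w with hadef
  have ha0 : 0 ≤ a := by rw [ha]; positivity
  have h1 : sminSq A * ∑ j, w j ^ 2 ≤ a := by rw [ha]; exact sminSq_le A w
  have h2 : a ^ 2 ≤ (∑ j, v j ^ 2) * ∑ j, w j ^ 2 := by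
    rw [hadef]
    exact Finset.sum_mul_sq_le_sq_mul_sq Finset.univ v w
  have hV : 0 ≤ ∑ j, v j ^ 2 := by positivity
  have hW : 0 ≤ ∑ j, w j ^ 2 := by positivity
  show a ≤ (sminSq A)⁻¹ * ∑ j, v j ^ 2
  rcases eq_or_lt_of_le ha0 with heq | hlt
  · rw [← heq]; positivity
  · rw [inv_mul_eq_div, le_div_iff₀ hs]
    nlinarith [mul_le_mul_of_nonneg_left h1 hV]

lemma mul_mul_transpose_diag {p q : ℕ} (Y : Matrix (Fin p) (Fin q) ℝ)
    (Q : Matrix (Fin q) (Fin q) ℝ) (i : Fin p) :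
    (Y * Q * Yᵀ) i i = (fun a => Y i a) ⬝ᵥ Q.mulVec (fun a => Y i a) := by
  simp only [Matrix.mul_apply, Matrix.transpose_apply, dotProduct, Matrix.mulVec,
    Finset.sum_mul, Finset.mul_sum]
  rw [Finset.sum_comm]
  simp [mul_assoc]

lemma transpose_gram_inv {p m : ℕ} (X : Matrix (Fin p) (Fin m) ℝ) :
    ((Xᵀ * X)⁻¹)ᵀ = (Xᵀ * X)⁻¹ := by
  rw [Matrix.transpose_nonsing_inv, Matrix.transpose_mul, Matrix.transpose_transpose]

lemma gram_inv_eq {p m : ℕ} (X : Matrix (Fin p) (Fin m) ℝ) (h : IsUnit (Xᵀ * X).det) :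
    (X * (Xᵀ * X)⁻¹)ᵀ * (X * (Xᵀ * X)⁻¹) = (Xᵀ * X)⁻¹ := by
  rw [Matrix.transpose_mul, transpose_gram_inv]
  calc (Xᵀ * X)⁻¹ * Xᵀ * (X * (Xᵀ * X)⁻¹)
      = (Xᵀ * X)⁻¹ * (Xᵀ * X) * (Xᵀ * X)⁻¹ := by
        simp only [Matrix.mul_assoc]
    _ = (Xᵀ * X)⁻¹ := by rw [Matrix.nonsing_inv_mul _ h, Matrix.one_mul]

lemma trace_inv_le {p m : ℕ} (hm : 0 < m) (X : Matrix (Fin p) (Fin m) ℝ)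
    (h : IsUnit (Xᵀ * X).det) :
    Matrix.trace ((Xᵀ * X)⁻¹) ≤ m * (sminSq X)⁻¹ := by
  have hdiag : ∀ a, (Xᵀ * X)⁻¹ a a ≤ (sminSq X)⁻¹ := by
    intro a
    have := inv_quadform_le hm X h (Pi.single a 1)
    have hsum : ∑ j, (Pi.single a 1 : Fin m → ℝ) j ^ 2 = 1 := by
      rw [Finset.sum_eq_single a]
      · simp
      · intro b _ hb; simp [Pi.single_apply, if_neg hb]
      · intro hb; exact absurd (Finset.mem_univ _) hb
    rw [hsum, mul_one] at this
    refine le_trans (le_of_eq ?_) this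
    simp only [dotProduct, Matrix.mulVec, Pi.single_apply]
    rw [Finset.sum_eq_single a]
    · simp only [if_pos rfl, one_mul]
      rw [Finset.sum_eq_single a]
      · simp
      · intro b _ hb; simp [if_neg hb]
      · intro hb; exact absurd (Finset.mem_univ _) hb
    · intro b _ hb; simp [if_neg hb]
    · intro hb; exact absurd (Finset.mem_univ _) hb
  calc Matrix.trace ((Xᵀ * X)⁻¹) = ∑ a, (Xᵀ * X)⁻¹ a a := rfl
    _ ≤ ∑ _a : Fin m, (sminSq X)⁻¹ := Finset.sum_le_sum fun a _ => hdiag a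
    _ = m * (sminSq X)⁻¹ := by simp [Finset.sum_const, nsmul_eq_mul]

lemma trace_inv_mul_inv_le {p q m : ℕ} (hm : 0 < m)
    (XI : Matrix (Fin p) (Fin m) ℝ) (XJ : Matrix (Fin q) (Fin m) ℝ)
    (hI : IsUnit (XIᵀ * XI).det) (hJ : IsUnit (XJᵀ * XJ).det) :
    Matrix.trace ((XIᵀ * XI)⁻¹ * (XJᵀ * XJ)⁻¹) ≤ m * (sminSq XI)⁻¹ * (sminSq XJ)⁻¹ := by
  set GI := XIᵀ * XI with hGI
  set GJ := XJᵀ * XJ with hGJ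
  set Y := XJ * GJ⁻¹ with hY
  have hsI : 0 < sminSq XI := sminSq_pos hm XI hI
  have hsJ : 0 < sminSq XJ := sminSq_pos hm XJ hJ
  have hYY : Yᵀ * Y = GJ⁻¹ := gram_inv_eq XJ hJ
  have h1 : Matrix.trace (GI⁻¹ * GJ⁻¹) = Matrix.trace (Y * GI⁻¹ * Yᵀ) := by
    rw [← hYY, ← Matrix.mul_assoc, Matrix.trace_mul_comm, ← Matrix.mul_assoc]
  have h2 : Matrix.trace (Y * GI⁻¹ * Yᵀ) ≤ (sminSq XI)⁻¹ * Matrix.trace (Yᵀ * Y) := by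
    have hkey : ∀ i, (Y * GI⁻¹ * Yᵀ) i i ≤ (sminSq XI)⁻¹ * ∑ a, Y i a ^ 2 := by
      intro i
      rw [mul_mul_transpose_diag]
      exact inv_quadform_le hm XI hI _
    calc Matrix.trace (Y * GI⁻¹ * Yᵀ) = ∑ i, (Y * GI⁻¹ * Yᵀ) i i := rfl
      _ ≤ ∑ i, (sminSq XI)⁻¹ * ∑ a, Y i a ^ 2 := Finset.sum_le_sum fun i _ => hkey i
      _ = (sminSq XI)⁻¹ * ∑ i, ∑ a, Y i a ^ 2 := by rw [Finset.mul_sum]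
      _ = (sminSq XI)⁻¹ * Matrix.trace (Yᵀ * Y) := by rw [sum_sq_eq_trace]
  have h3 : Matrix.trace (Yᵀ * Y) ≤ m * (sminSq XJ)⁻¹ := by
    rw [hYY]; exact trace_inv_le hm XJ hJ
  calc Matrix.trace (GI⁻¹ * GJ⁻¹) ≤ (sminSq XI)⁻¹ * Matrix.trace (Yᵀ * Y) := h1 ▸ h2
    _ ≤ (sminSq XI)⁻¹ * (m * (sminSq XJ)⁻¹) := by
        apply mul_le_mul_of_nonneg_left h3 (by positivity)
    _ = m * (sminSq XI)⁻¹ * (sminSq XJ)⁻¹ := by ring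

lemma frob_term_eq {N n m : ℕ} (I J : Finset (Fin N)) (hI : I.card = n) (hJ : J.card = n)
    (XI XJ : Matrix (Fin n) (Fin m) ℝ) (hdI : IsUnit (XIᵀ * XI).det)
    (hdJ : IsUnit (XJᵀ * XJ).det) :
    ∑ i, ∑ j,
      (((selMat I hI)ᵀ * XI * (XIᵀ * XI)⁻¹ * (XJᵀ * XJ)⁻¹ * XJᵀ * selMat J hJ) i j) ^ 2
      = Matrix.trace ((XIᵀ * XI)⁻¹ * (XJᵀ * XJ)⁻¹) := by
  set RI := selMat I hI with hRI
  set RJ := selMat J hJ with hRJ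
  set T := RIᵀ * XI * (XIᵀ * XI)⁻¹ * (XJᵀ * XJ)⁻¹ * XJᵀ * RJ with hT
  rw [sum_sq_eq_trace, Matrix.trace_mul_comm]
  have key : T * Tᵀ =
      RIᵀ * (XI * ((XIᵀ * XI)⁻¹ * ((XJᵀ * XJ)⁻¹ * ((XIᵀ * XI)⁻¹ * (XIᵀ * RI))))) := by
    rw [hT]
    simp only [Matrix.transpose_mul, Matrix.transpose_transpose, transpose_gram_inv,
      Matrix.mul_assoc]
    rw [← Matrix.mul_assoc RJ RJᵀ, selMat_mul_transpose, Matrix.one_mul]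
    rw [← Matrix.mul_assoc XJᵀ XJ, ← Matrix.mul_assoc ((XJᵀ * XJ)⁻¹) (XJᵀ * XJ),
      Matrix.nonsing_inv_mul _ hdJ, Matrix.one_mul]
  rw [key, Matrix.trace_mul_comm]
  have key2 : XI * ((XIᵀ * XI)⁻¹ * ((XJᵀ * XJ)⁻¹ * ((XIᵀ * XI)⁻¹ * (XIᵀ * RI)))) * RIᵀ =
      XI * ((XIᵀ * XI)⁻¹ * ((XJᵀ * XJ)⁻¹ * ((XIᵀ * XI)⁻¹ * XIᵀ))) := by
    simp only [Matrix.mul_assoc]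
    have hRIc : RI * RIᵀ = 1 := selMat_mul_transpose I hI
    rw [hRIc, Matrix.mul_one]
  rw [key2, Matrix.trace_mul_comm]
  have key3 : (XIᵀ * XI)⁻¹ * ((XJᵀ * XJ)⁻¹ * ((XIᵀ * XI)⁻¹ * XIᵀ)) * XI =
      (XIᵀ * XI)⁻¹ * (XJᵀ * XJ)⁻¹ := by
    simp only [Matrix.mul_assoc]
    rw [Matrix.nonsing_inv_mul _ hdI, Matrix.mul_one]
  rw [key3]

noncomputable def termM (N M n m : ℕ) (X : Matrix (Fin N) (Fin M) ℝ)
    (F : Finset (Fin M)) (hF : F.card = m)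
    (I J : {x // x ∈ Finset.powersetCard n (Finset.univ : Finset (Fin N))}) :
    Matrix (Fin N) (Fin N) ℝ :=
  (selMat I.1 (Finset.mem_powersetCard.mp I.2).2)ᵀ *
    mpMat N M n m X F hF I.1 (Finset.mem_powersetCard.mp I.2).2 *
    ((mpMat N M n m X F hF I.1 (Finset.mem_powersetCard.mp I.2).2)ᵀ *
      mpMat N M n m X F hF I.1 (Finset.mem_powersetCard.mp I.2).2)⁻¹ *
    ((mpMat N M n m X F hF J.1 (Finset.mem_powersetCard.mp J.2).2)ᵀ *
      mpMat N M n m X F hF J.1 (Finset.mem_powersetCard.mp J.2).2)⁻¹ *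
    (mpMat N M n m X F hF J.1 (Finset.mem_powersetCard.mp J.2).2)ᵀ *
    selMat J.1 (Finset.mem_powersetCard.mp J.2).2

lemma sandwich_zero_left {N n m : ℕ} (I J : Finset (Fin N)) (hI : I.card = n) (hJ : J.card = n)
    (A : Matrix (Fin n) (Fin m) ℝ) (B C : Matrix (Fin m) (Fin m) ℝ) (D : Matrix (Fin m) (Fin n) ℝ)
    {i : Fin N} (hi : i ∉ I) (j : Fin N) :
    ((selMat I hI)ᵀ * A * B * C * D * selMat J hJ) i j = 0 := by
  have h : (selMat I hI)ᵀ * A * B * C * D * selMat J hJ =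
      (selMat I hI)ᵀ * (A * (B * (C * (D * selMat J hJ)))) := by simp only [Matrix.mul_assoc]
  rw [h]; exact transpose_selMat_mul_apply _ _ _ hi j

lemma sandwich_zero_right {N n m : ℕ} (I J : Finset (Fin N)) (hI : I.card = n) (hJ : J.card = n)
    (A : Matrix (Fin n) (Fin m) ℝ) (B C : Matrix (Fin m) (Fin m) ℝ) (D : Matrix (Fin m) (Fin n) ℝ)
    (i : Fin N) {j : Fin N} (hj : j ∉ J) :
    ((selMat I hI)ᵀ * A * B * C * D * selMat J hJ) i j = 0 :=
  mul_selMat_apply J hJ _ i hj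

/-- ‖𝐀_F‖_F² ≤ (n²m/N²)·((1/C(N,n)) ∑_I σ_min⁻²(X_{I,F}))². -/
theorem frobenius_AF_le (N M n m : ℕ) (hm : 0 < m) (hmn : m ≤ n) (hn : n ≤ N)
    (X : Matrix (Fin N) (Fin M) ℝ) (F : Finset (Fin M)) (hF : F.card = m)
    (hrank : ∀ (I : Finset (Fin N)) (hI : I.card = n),
      IsUnit ((mpMat N M n m X F hF I hI)ᵀ * mpMat N M n m X F hF I hI).det) :
    (∑ i, ∑ j, (AF N M n m X F hF i j) ^ 2)
      ≤ ((n : ℝ) ^ 2 * m / (N : ℝ) ^ 2) *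
          ((N.choose n : ℝ)⁻¹ *
            ∑ I ∈ (Finset.powersetCard n (Finset.univ : Finset (Fin N))).attach,
              (sminSq (mpMat N M n m X F hF I.1 (Finset.mem_powersetCard.mp I.2).2))⁻¹) ^ 2 := by
  classical
  have hNpos : 0 < N := lt_of_lt_of_le (lt_of_lt_of_le hm hmn) hn
  have hnpos : 0 < n := lt_of_lt_of_le hm hmn
  set P := (Finset.powersetCard n (Finset.univ : Finset (Fin N))).attach with hPdef
  set σ : {x // x ∈ Finset.powersetCard n (Finset.univ : Finset (Fin N))} → ℝ :=
    fun I => (sminSq (mpMat N M n m X F hF I.1 (Finset.mem_powersetCard.mp I.2).2))⁻¹ with hσ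
  set S : ℝ := ∑ I ∈ P, σ I with hSdef
  set C : ℝ := (N.choose n : ℝ) with hCdef
  set D : ℕ := (N - 1).choose (n - 1) with hDdef
  have hC : (0 : ℝ) < C := by
    rw [hCdef]; exact_mod_cast Nat.choose_pos hn
  have hN : (0 : ℝ) < N := by exact_mod_cast hNpos
  have hAF : AF N M n m X F hF =
      (C ^ 2)⁻¹ • ∑ I ∈ P, ∑ J ∈ P, termM N M n m X F hF I J := rfl
  -- pointwise bound
  have step1 : ∀ i j : Fin N, (AF N M n m X F hF i j) ^ 2 ≤
      ((C ^ 2)⁻¹) ^ 2 * (((D : ℝ)) ^ 2 *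
        ∑ x ∈ P ×ˢ P, (termM N M n m X F hF x.1 x.2 i j) ^ 2) := by
    intro i j
    have hAFij : AF N M n m X F hF i j =
        (C ^ 2)⁻¹ * ∑ x ∈ P ×ˢ P, termM N M n m X F hF x.1 x.2 i j := by
      rw [hAF, Matrix.smul_apply, Matrix.sum_apply, smul_eq_mul]
      congr 1
      rw [Finset.sum_product]
      exact Finset.sum_congr rfl fun I _ => (Matrix.sum_apply i j P _)
    have hsupp : ∀ x ∈ P ×ˢ P, termM N M n m X F hF x.1 x.2 i j ≠ 0 →
        (i ∈ (x.1.1 : Finset (Fin N)) ∧ j ∈ (x.2.1 : Finset (Fin N))) := by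
      intro x _ hx
      constructor
      · by_contra hmem
        exact hx (sandwich_zero_left x.1.1 x.2.1 _ _ _ _ _ _ hmem j)
      · by_contra hmem
        exact hx (sandwich_zero_right x.1.1 x.2.1 _ _ _ _ _ _ i hmem)
    have hfil : ∑ x ∈ P ×ˢ P, termM N M n m X F hF x.1 x.2 i j =
        ∑ x ∈ (P ×ˢ P).filter
          (fun x => i ∈ (x.1.1 : Finset (Fin N)) ∧ j ∈ (x.2.1 : Finset (Fin N))),
          termM N M n m X F hF x.1 x.2 i j :=
      (Finset.sum_filter_of_ne hsupp).symm
    have hCS : (∑ x ∈ (P ×ˢ P).filter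
          (fun x => i ∈ (x.1.1 : Finset (Fin N)) ∧ j ∈ (x.2.1 : Finset (Fin N))),
          termM N M n m X F hF x.1 x.2 i j) ^ 2 ≤
        (((P ×ˢ P).filter
          (fun x => i ∈ (x.1.1 : Finset (Fin N)) ∧ j ∈ (x.2.1 : Finset (Fin N)))).card : ℝ) *
          ∑ x ∈ (P ×ˢ P).filter
            (fun x => i ∈ (x.1.1 : Finset (Fin N)) ∧ j ∈ (x.2.1 : Finset (Fin N))),
            (termM N M n m X F hF x.1 x.2 i j) ^ 2 :=
      sq_sum_le_card_mul_sum_sq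
    have hcard : ((((P ×ˢ P).filter
          (fun x => i ∈ (x.1.1 : Finset (Fin N)) ∧ j ∈ (x.2.1 : Finset (Fin N)))).card : ℝ)) ≤
        ((D : ℝ)) ^ 2 := by
      have hprod : ((P ×ˢ P).filter
          (fun x => i ∈ (x.1.1 : Finset (Fin N)) ∧ j ∈ (x.2.1 : Finset (Fin N)))) =
          (P.filter fun I => i ∈ (I.1 : Finset (Fin N))) ×ˢ
          (P.filter fun J => j ∈ (J.1 : Finset (Fin N))) := by
        ext x
        simp only [Finset.mem_filter, Finset.mem_product]
        tauto
      rw [hprod, Finset.card_product]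
      have h1 := card_filter_attach_le N n i
      have h2 := card_filter_attach_le N n j
      have : ((P.filter fun I => i ∈ (I.1 : Finset (Fin N))).card *
          (P.filter fun J => j ∈ (J.1 : Finset (Fin N))).card : ℕ) ≤ D * D :=
        Nat.mul_le_mul h1 h2
      calc (((P.filter fun I => i ∈ (I.1 : Finset (Fin N))).card *
            (P.filter fun J => j ∈ (J.1 : Finset (Fin N))).card : ℕ) : ℝ)
          ≤ ((D * D : ℕ) : ℝ) := by exact_mod_cast this
        _ = ((D : ℝ)) ^ 2 := by push_cast; ring
    have hmono : ∑ x ∈ (P ×ˢ P).filter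
          (fun x => i ∈ (x.1.1 : Finset (Fin N)) ∧ j ∈ (x.2.1 : Finset (Fin N))),
          (termM N M n m X F hF x.1 x.2 i j) ^ 2 ≤
        ∑ x ∈ P ×ˢ P, (termM N M n m X F hF x.1 x.2 i j) ^ 2 :=
      Finset.sum_le_sum_of_subset_of_nonneg (Finset.filter_subset _ _)
        (fun _ _ _ => sq_nonneg _)
    rw [hAFij, mul_pow]
    apply mul_le_mul_of_nonneg_left _ (by positivity)
    rw [hfil]
    calc (∑ x ∈ (P ×ˢ P).filter
          (fun x => i ∈ (x.1.1 : Finset (Fin N)) ∧ j ∈ (x.2.1 : Finset (Fin N))),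
          termM N M n m X F hF x.1 x.2 i j) ^ 2
        ≤ _ := hCS
      _ ≤ ((D : ℝ)) ^ 2 * ∑ x ∈ P ×ˢ P, (termM N M n m X F hF x.1 x.2 i j) ^ 2 := by
          apply mul_le_mul hcard hmono (Finset.sum_nonneg fun _ _ => sq_nonneg _) (by positivity)
  -- sum the pointwise bound
  have step2 : (∑ i, ∑ j, (AF N M n m X F hF i j) ^ 2) ≤
      ((C ^ 2)⁻¹) ^ 2 * (((D : ℝ)) ^ 2 *
        ∑ x ∈ P ×ˢ P, ∑ i, ∑ j, (termM N M n m X F hF x.1 x.2 i j) ^ 2) := by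
    have hswap : ∑ i, ∑ j, ∑ x ∈ P ×ˢ P, (termM N M n m X F hF x.1 x.2 i j) ^ 2 =
        ∑ x ∈ P ×ˢ P, ∑ i, ∑ j, (termM N M n m X F hF x.1 x.2 i j) ^ 2 := by
      calc ∑ i, ∑ j, ∑ x ∈ P ×ˢ P, (termM N M n m X F hF x.1 x.2 i j) ^ 2
          = ∑ i, ∑ x ∈ P ×ˢ P, ∑ j, (termM N M n m X F hF x.1 x.2 i j) ^ 2 :=
            Finset.sum_congr rfl fun i _ => Finset.sum_comm
        _ = _ := Finset.sum_comm
    calc ∑ i, ∑ j, (AF N M n m X F hF i j) ^ 2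
        ≤ ∑ i, ∑ j, ((C ^ 2)⁻¹) ^ 2 * (((D : ℝ)) ^ 2 *
            ∑ x ∈ P ×ˢ P, (termM N M n m X F hF x.1 x.2 i j) ^ 2) :=
          Finset.sum_le_sum fun i _ => Finset.sum_le_sum fun j _ => step1 i j
      _ = ((C ^ 2)⁻¹) ^ 2 * (((D : ℝ)) ^ 2 *
            ∑ i, ∑ j, ∑ x ∈ P ×ˢ P, (termM N M n m X F hF x.1 x.2 i j) ^ 2) := by
          simp only [← Finset.mul_sum]
      _ = _ := by rw [hswap]
  -- per-term bound
  have step3 : ∀ x ∈ P ×ˢ P,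
      ∑ i, ∑ j, (termM N M n m X F hF x.1 x.2 i j) ^ 2 ≤ (m : ℝ) * σ x.1 * σ x.2 := by
    intro x _
    have heq : ∑ i, ∑ j, (termM N M n m X F hF x.1 x.2 i j) ^ 2 =
        Matrix.trace
          (((mpMat N M n m X F hF x.1.1 (Finset.mem_powersetCard.mp x.1.2).2)ᵀ *
            mpMat N M n m X F hF x.1.1 (Finset.mem_powersetCard.mp x.1.2).2)⁻¹ *
           ((mpMat N M n m X F hF x.2.1 (Finset.mem_powersetCard.mp x.2.2).2)ᵀ *
            mpMat N M n m X F hF x.2.1 (Finset.mem_powersetCard.mp x.2.2).2)⁻¹) :=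
      frob_term_eq x.1.1 x.2.1 (Finset.mem_powersetCard.mp x.1.2).2
        (Finset.mem_powersetCard.mp x.2.2).2 _ _ (hrank _ _) (hrank _ _)
    rw [heq]
    exact trace_inv_mul_inv_le hm _ _ (hrank _ _) (hrank _ _)
  -- combine
  have step4 : ∑ x ∈ P ×ˢ P, ((m : ℝ) * σ x.1 * σ x.2) = (m : ℝ) * S * S := by
    rw [Finset.sum_product]
    have : ∀ I ∈ P, ∑ J ∈ P, (m : ℝ) * σ I * σ J = (m : ℝ) * σ I * S := by
      intro I _
      rw [← Finset.mul_sum]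
    rw [Finset.sum_congr rfl this]
    calc ∑ I ∈ P, (m : ℝ) * σ I * S = (∑ I ∈ P, σ I) * ((m : ℝ) * S) := by
          rw [Finset.sum_mul]
          exact Finset.sum_congr rfl fun I _ => by ring
      _ = (m : ℝ) * S * S := by rw [← hSdef]; ring
  have step5 : (∑ i, ∑ j, (AF N M n m X F hF i j) ^ 2) ≤
      ((C ^ 2)⁻¹) ^ 2 * (((D : ℝ)) ^ 2 * ((m : ℝ) * S * S)) := by
    refine le_trans step2 ?_
    apply mul_le_mul_of_nonneg_left _ (by positivity)
    apply mul_le_mul_of_nonneg_left _ (by positivity)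
    rw [← step4]
    exact Finset.sum_le_sum step3
  -- final arithmetic
  have hNat : N * (N - 1).choose (n - 1) = N.choose n * n := by
    obtain ⟨N', rfl⟩ := Nat.exists_eq_succ_of_ne_zero hNpos.ne'
    obtain ⟨n', rfl⟩ := Nat.exists_eq_succ_of_ne_zero hnpos.ne'
    simp only [Nat.succ_sub_one]
    exact Nat.add_one_mul_choose_eq N' n'
  have hDN : (N : ℝ) * (D : ℝ) = C * n := by
    rw [hCdef, hDdef]
    exact_mod_cast hNat
  have hfinal : ((C ^ 2)⁻¹) ^ 2 * (((D : ℝ)) ^ 2 * ((m : ℝ) * S * S)) =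
      ((n : ℝ) ^ 2 * m / (N : ℝ) ^ 2) * (C⁻¹ * S) ^ 2 := by
    have hD2 : (D : ℝ) ^ 2 * (N : ℝ) ^ 2 = (n : ℝ) ^ 2 * C ^ 2 := by
      linear_combination (↑N * ↑D + C * ↑n) * hDN
    field_simp
    linear_combination S ^ 2 * hD2
  exact le_trans step5 (le_of_eq hfinal)
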